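/- Let A_d = K[t_1,...,t_d]⟨∂_{t_1},...,∂_{t_d}⟩ be the Weyl algebra over a field K of characteristic zero, and let L = ⊕_{j∈ℤ} L_j be a graded module over the associated graded ring of A_d with respect to the filtration by ord(∂) − ord(t) (so that t_i·L_j ⊆ L_{j-1} and ∂_{t_i}·L_j ⊆ L_{j+1}). Assume there is a nonzero b(θ) ∈ K[θ] with b(ϑ + j)·L_j = 0 for all j, where ϑ = t_1∂_{t_1} + ⋯ + t_d∂_{t_d}. If b(k) ≠ 0 for an integer k, then the Koszul complex K^•(L_•[k], t_1,...,t_d), whose term in degree −j is L_{k+j} ⊗ Λ^j ℤ^d with differential δ(u ⊗ e_{i_1}∧⋯∧e_{i_j}) = Σ_l t_l u ⊗ e_l ∧ e_{i_1}∧⋯∧e_{i_j}, is exact. -/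
import Mathlib


noncomputable section

/-- The Koszul differential associated with commuting operators `T 1, …, T d` on `M`,
in the basis of `Λ^j ℤ^d` given by `j`-element subsets of `{1,…,d}`. -/
def kosDelta {K : Type} [Field K] {M : Type} [AddCommGroup M] [Module K M]
    (d : ℕ) (T : Fin d → Module.End K M)
    (j : ℕ) (f : {S : Finset (Fin d) // S.card = j} → M) :
    {S : Finset (Fin d) // S.card = j + 1} → M :=
  fun S => ∑ l ∈ S.1.attach,
    ((-1 : ℤ) ^ (({x ∈ S.1 | x < l.1} : Finset (Fin d)).card)) •
      (T l.1 (f ⟨S.1.erase l.1, by simp [Finset.card_erase_of_mem l.2, S.2]⟩))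

end

section Aux

variable {K : Type} [Field K] {M : Type} [AddCommGroup M] [Module K M]
  (d : ℕ) (T D : Fin d → Module.End K M)

/-- extend a function on card-`j` sets by zero -/
noncomputable def exF {j : ℕ} (f : {S : Finset (Fin d) // S.card = j} → M) :
    Finset (Fin d) → M :=
  fun A => if h : A.card = j then f ⟨A, h⟩ else 0

/-- the sign -/
def sg (A : Finset (Fin d)) (a : Fin d) : ℤ :=
  (-1 : ℤ) ^ ((A.filter (fun x => x < a)).card)

/-- the Koszul "codifferential" built from the `D i` -/
noncomputable def kosDown (j : ℕ)
    (f : {S : Finset (Fin d) // S.card = j + 1} → M) :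
    {S : Finset (Fin d) // S.card = j} → M :=
  fun S => ∑ l ∈ (S.1ᶜ).attach,
    sg d S.1 l.1 • D l.1 (f ⟨insert l.1 S.1, by
      have : l.1 ∉ S.1 := Finset.mem_compl.mp l.2
      simp [Finset.card_insert_of_notMem this, S.2]⟩)

lemma kosDelta_eq {j : ℕ} (f : {S : Finset (Fin d) // S.card = j} → M)
    (S : {S : Finset (Fin d) // S.card = j + 1}) :
    kosDelta d T j f S = ∑ l ∈ S.1, sg d S.1 l • T l (exF d f (S.1.erase l)) := by
  rw [← Finset.sum_attach S.1 (fun l => sg d S.1 l • T l (exF d f (S.1.erase l)))]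
  refine Finset.sum_congr rfl fun l _ => ?_
  have hc : (S.1.erase l.1).card = j := by
    simp [Finset.card_erase_of_mem l.2, S.2]
  simp only [kosDelta, sg, exF, dif_pos hc]

lemma kosDown_eq {j : ℕ} (f : {S : Finset (Fin d) // S.card = j + 1} → M)
    (S : {S : Finset (Fin d) // S.card = j}) :
    kosDown d D j f S = ∑ m ∈ S.1ᶜ, sg d S.1 m • D m (exF d f (insert m S.1)) := by
  rw [← Finset.sum_attach (S.1ᶜ) (fun m => sg d S.1 m • D m (exF d f (insert m S.1)))]
  refine Finset.sum_congr rfl fun m _ => ?_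
  have hm : m.1 ∉ S.1 := Finset.mem_compl.mp m.2
  have hc : (insert m.1 S.1).card = j + 1 := by
    simp [Finset.card_insert_of_notMem hm, S.2]
  simp only [kosDown, exF, dif_pos hc]

-- sign lemmas
lemma sg_erase_self {S : Finset (Fin d)} {l : Fin d} : sg d (S.erase l) l = sg d S l := by
  unfold sg
  rw [Finset.filter_erase, Finset.erase_eq_of_notMem (by simp)]

lemma sg_insert_self {S : Finset (Fin d)} {m : Fin d} : sg d (insert m S) m = sg d S m := by
  unfold sg
  rw [Finset.filter_insert, if_neg (by simp)]

lemma sg_sq (A : Finset (Fin d)) (a : Fin d) : sg d A a * sg d A a = 1 := by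
  unfold sg
  rw [← pow_add]
  exact Even.neg_one_pow ⟨_, rfl⟩

lemma sg_cross {S : Finset (Fin d)} {l m : Fin d} (hl : l ∈ S) (hm : m ∉ S) :
    sg d S l * sg d (S.erase l) m = -(sg d S m * sg d (insert m S) l) := by
  have hne : l ≠ m := fun h => hm (h ▸ hl)
  rcases lt_or_gt_of_ne hne with hlm | hml
  · -- l < m
    have h1 : sg d (S.erase l) m = -sg d S m := by
      unfold sg
      rw [Finset.filter_erase]
      have hmem : l ∈ S.filter (fun x => x < m) := Finset.mem_filter.2 ⟨hl, hlm⟩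
      rw [Finset.card_erase_of_mem hmem]
      have h1 : 1 ≤ (S.filter (fun x => x < m)).card := Finset.card_pos.2 ⟨l, hmem⟩
      conv_rhs => rw [← Nat.sub_add_cancel h1]
      rw [pow_succ]; ring
    have h2 : sg d (insert m S) l = sg d S l := by
      unfold sg
      rw [Finset.filter_insert, if_neg (by exact not_lt_of_gt hlm)]
    rw [h1, h2]; ring
  · -- m < l
    have h1 : sg d (S.erase l) m = sg d S m := by
      unfold sg
      rw [Finset.filter_erase, Finset.erase_eq_of_notMem]
      simp [not_lt_of_gt hml]
    have h2 : sg d (insert m S) l = -sg d S l := by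
      unfold sg
      rw [Finset.filter_insert, if_pos hml]
      rw [Finset.card_insert_of_notMem (by simp [hm])]
      rw [pow_succ]; ring
    rw [h1, h2]; ring

end Aux

section Core

variable {K : Type} [Field K] {M : Type} [AddCommGroup M] [Module K M]
  {d : ℕ} (T D : Fin d → Module.End K M)

lemma end_comm {i j : Fin d} (hDT : ∀ i j, D i * T j - T j * D i = if i = j then 1 else 0)
    (hne : i ≠ j) (x : M) : D i (T j x) = T j (D i x) := by
  have h := hDT i j
  rw [if_neg hne, sub_eq_zero] at h
  exact DFunLike.congr_fun h x

lemma end_comm_self {i : Fin d} (hDT : ∀ i j, D i * T j - T j * D i = if i = j then 1 else 0)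
    (x : M) : D i (T i x) = T i (D i x) + x := by
  have h := hDT i i
  rw [if_pos rfl, sub_eq_iff_eq_add] at h
  have := DFunLike.congr_fun h (x)
  simpa [add_comm] using this

lemma core_identity
    (hDT : ∀ i j, D i * T j - T j * D i = if i = j then 1 else 0)
    (S : Finset (Fin d)) (F : Finset (Fin d) → M) :
    (∑ l ∈ S, sg d S l • T l (∑ m ∈ (S.erase l)ᶜ,
        sg d (S.erase l) m • D m (F (insert m (S.erase l)))))
  + (∑ m ∈ Sᶜ, sg d S m • D m (∑ l ∈ insert m S,
        sg d (insert m S) l • T l (F ((insert m S).erase l))))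
  = (∑ i, T i (D i (F S))) + (Sᶜ.card : ℤ) • F S := by
  have step1 : (∑ l ∈ S, sg d S l • T l (∑ m ∈ (S.erase l)ᶜ,
        sg d (S.erase l) m • D m (F (insert m (S.erase l)))))
      = ∑ l ∈ S, ∑ m ∈ (S.erase l)ᶜ,
          (sg d S l * sg d (S.erase l) m) • T l (D m (F (insert m (S.erase l)))) := by
    refine Finset.sum_congr rfl fun l hl => ?_
    rw [map_sum, Finset.smul_sum]
    refine Finset.sum_congr rfl fun m hm => ?_
    rw [map_zsmul, smul_smul]
  have step2 : (∑ m ∈ Sᶜ, sg d S m • D m (∑ l ∈ insert m S,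
        sg d (insert m S) l • T l (F ((insert m S).erase l))))
      = ∑ m ∈ Sᶜ, ∑ l ∈ insert m S,
          (sg d S m * sg d (insert m S) l) • D m (T l (F ((insert m S).erase l))) := by
    refine Finset.sum_congr rfl fun m hm => ?_
    rw [map_sum, Finset.smul_sum]
    refine Finset.sum_congr rfl fun l hl => ?_
    rw [map_zsmul, smul_smul]
  rw [step1, step2]
  have split1 : ∑ l ∈ S, ∑ m ∈ (S.erase l)ᶜ,
          (sg d S l * sg d (S.erase l) m) • T l (D m (F (insert m (S.erase l))))
      = ∑ l ∈ S, (T l (D l (F S)) + ∑ m ∈ Sᶜ,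
          (sg d S l * sg d (S.erase l) m) • T l (D m (F (insert m (S.erase l))))) := by
    refine Finset.sum_congr rfl fun l hl => ?_
    have hce : (S.erase l)ᶜ = insert l Sᶜ := by
      ext x
      simp only [Finset.mem_compl, Finset.mem_erase, Finset.mem_insert]
      tauto
    rw [hce, Finset.sum_insert (by simp [hl])]
    congr 1
    rw [sg_erase_self, sg_sq, Finset.insert_erase hl, one_smul]
  have split2 : ∑ m ∈ Sᶜ, ∑ l ∈ insert m S,
          (sg d S m * sg d (insert m S) l) • D m (T l (F ((insert m S).erase l)))
      = ∑ m ∈ Sᶜ, ((T m (D m (F S)) + F S) + ∑ l ∈ S,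
          (sg d S m * sg d (insert m S) l) • D m (T l (F ((insert m S).erase l)))) := by
    refine Finset.sum_congr rfl fun m hm => ?_
    have hm' : m ∉ S := Finset.mem_compl.mp hm
    rw [Finset.sum_insert hm']
    congr 1
    rw [sg_insert_self, sg_sq, Finset.erase_insert hm', one_smul]
    exact end_comm_self T D hDT _
  rw [split1, split2, Finset.sum_add_distrib, Finset.sum_add_distrib]
  have cross : (∑ l ∈ S, ∑ m ∈ Sᶜ,
          (sg d S l * sg d (S.erase l) m) • T l (D m (F (insert m (S.erase l)))))
      + (∑ m ∈ Sᶜ, ∑ l ∈ S,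
          (sg d S m * sg d (insert m S) l) • D m (T l (F ((insert m S).erase l)))) = 0 := by
    rw [Finset.sum_comm (s := Sᶜ) (t := S), ← Finset.sum_add_distrib]
    refine Finset.sum_eq_zero fun l hl => ?_
    rw [← Finset.sum_add_distrib]
    refine Finset.sum_eq_zero fun m hm => ?_
    have hm' : m ∉ S := Finset.mem_compl.mp hm
    have hne : m ≠ l := fun h => hm' (h ▸ hl)
    rw [end_comm T D hDT hne, Finset.erase_insert_of_ne hne, ← add_smul,
      sg_cross d hl hm', mul_comm (sg d S m)]
    simp
  have diag : (∑ l ∈ S, T l (D l (F S))) + ∑ m ∈ Sᶜ, (T m (D m (F S)) + F S)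
      = (∑ i, T i (D i (F S))) + (Sᶜ.card : ℤ) • F S := by
    rw [Finset.sum_add_distrib, Finset.sum_const, ← add_assoc,
      Finset.sum_add_sum_compl, natCast_zsmul]
  calc _ = ((∑ l ∈ S, T l (D l (F S))) + ∑ m ∈ Sᶜ, (T m (D m (F S)) + F S))
        + ((∑ l ∈ S, ∑ m ∈ Sᶜ,
          (sg d S l * sg d (S.erase l) m) • T l (D m (F (insert m (S.erase l)))))
      + (∑ m ∈ Sᶜ, ∑ l ∈ S,
          (sg d S m * sg d (insert m S) l) • D m (T l (F ((insert m S).erase l))))) := by abel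
    _ = _ := by rw [cross, add_zero, diag]

end Core

section Hom

variable {K : Type} [Field K] {M : Type} [AddCommGroup M] [Module K M]
  {d : ℕ} (T D : Fin d → Module.End K M)

lemma exF_kosDelta {j : ℕ} (f : {S : Finset (Fin d) // S.card = j} → M)
    (A : Finset (Fin d)) (h : A.card = j + 1) :
    exF d (kosDelta d T j f) A = ∑ l ∈ A, sg d A l • T l (exF d f (A.erase l)) := by
  rw [exF, dif_pos h]
  exact kosDelta_eq d T f ⟨A, h⟩

lemma exF_kosDown {j : ℕ} (f : {S : Finset (Fin d) // S.card = j + 1} → M)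
    (A : Finset (Fin d)) (h : A.card = j) :
    exF d (kosDown d D j f) A = ∑ m ∈ Aᶜ, sg d A m • D m (exF d f (insert m A)) := by
  rw [exF, dif_pos h]
  exact kosDown_eq d D f ⟨A, h⟩

lemma exF_self {j : ℕ} (f : {S : Finset (Fin d) // S.card = j} → M)
    (S : {S : Finset (Fin d) // S.card = j}) : exF d f S.1 = f S := by
  rw [exF, dif_pos S.2]

lemma hom0 (hDT : ∀ i j, D i * T j - T j * D i = if i = j then 1 else 0)
    (f : {S : Finset (Fin d) // S.card = 0} → M)
    (S : {S : Finset (Fin d) // S.card = 0}) :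
    kosDown d D 0 (kosDelta d T 0 f) S
      = (∑ i, T i (D i (f S))) + (d : ℤ) • f S := by
  have hS : S.1 = (∅ : Finset (Fin d)) := Finset.card_eq_zero.mp S.2
  have hcore := core_identity T D hDT S.1 (exF d f)
  have h1 : (∑ l ∈ S.1, sg d S.1 l • T l (∑ m ∈ (S.1.erase l)ᶜ,
      sg d (S.1.erase l) m • D m (exF d f (insert m (S.1.erase l))))) = 0 := by
    rw [hS]; simp
  rw [h1, zero_add] at hcore
  rw [kosDown_eq]
  have h2 : (∑ m ∈ S.1ᶜ, sg d S.1 m • D m (exF d (kosDelta d T 0 f) (insert m S.1)))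
      = ∑ m ∈ S.1ᶜ, sg d S.1 m • D m (∑ l ∈ insert m S.1,
          sg d (insert m S.1) l • T l (exF d f ((insert m S.1).erase l))) := by
    refine Finset.sum_congr rfl fun m hm => ?_
    have hm' : m ∉ S.1 := Finset.mem_compl.mp hm
    rw [exF_kosDelta T f _ (by simp [Finset.card_insert_of_notMem hm', S.2])]
  rw [h2, hcore, exF_self]
  congr 2
  rw [hS]
  simp
  
lemma homJ (hDT : ∀ i j, D i * T j - T j * D i = if i = j then 1 else 0)
    {j : ℕ} (f : {S : Finset (Fin d) // S.card = j + 1} → M)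
    (S : {S : Finset (Fin d) // S.card = j + 1}) :
    kosDelta d T j (kosDown d D j f) S + kosDown d D (j + 1) (kosDelta d T (j + 1) f) S
      = (∑ i, T i (D i (f S))) + ((d : ℤ) - (j + 1)) • f S := by
  have hcore := core_identity T D hDT S.1 (exF d f)
  rw [kosDelta_eq, kosDown_eq]
  have h1 : (∑ l ∈ S.1, sg d S.1 l • T l (exF d (kosDown d D j f) (S.1.erase l)))
      = ∑ l ∈ S.1, sg d S.1 l • T l (∑ m ∈ (S.1.erase l)ᶜ,
          sg d (S.1.erase l) m • D m (exF d f (insert m (S.1.erase l)))) := by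
    refine Finset.sum_congr rfl fun l hl => ?_
    rw [exF_kosDown D f _ (by simp [Finset.card_erase_of_mem hl, S.2])]
  have h2 : (∑ m ∈ S.1ᶜ, sg d S.1 m • D m (exF d (kosDelta d T (j + 1) f) (insert m S.1)))
      = ∑ m ∈ S.1ᶜ, sg d S.1 m • D m (∑ l ∈ insert m S.1,
          sg d (insert m S.1) l • T l (exF d f ((insert m S.1).erase l))) := by
    refine Finset.sum_congr rfl fun m hm => ?_
    have hm' : m ∉ S.1 := Finset.mem_compl.mp hm
    rw [exF_kosDelta T f _ (by simp [Finset.card_insert_of_notMem hm', S.2])]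
  rw [h1, h2, hcore, exF_self]
  congr 2
  have hle : j + 1 ≤ d := by
    have := Finset.card_le_univ S.1
    simpa [S.2] using this
  rw [Finset.card_compl, S.2]
  simp only [Fintype.card_fin]
  push_cast [Nat.cast_sub hle]
  ring

end Hom

section Alg

variable {K : Type} [Field K] {M : Type} [AddCommGroup M] [Module K M]
  {d : ℕ} (T D : Fin d → Module.End K M)

/-- `ν c = ϑ + c·1` -/
noncomputable def nuOp (c : K) : Module.End K M := (∑ i, T i * D i) + c • (1 : Module.End K M)

lemma theta_T (hTT : ∀ i j, T i * T j = T j * T i)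
    (hDT : ∀ i j, D i * T j - T j * D i = if i = j then 1 else 0) (i : Fin d) :
    (∑ i, T i * D i) * T i = T i * (∑ i, T i * D i) + T i := by
  have hjt : ∀ j, D j * T i = T i * D j + (if j = i then 1 else 0) := by
    intro j
    have h := hDT j i
    rw [sub_eq_iff_eq_add] at h
    rw [h, add_comm]
  rw [Finset.sum_mul, Finset.mul_sum]
  have : ∀ j : Fin d, T j * D j * T i = T i * (T j * D j) + (if j = i then T j else 0) := by
    intro j
    rw [mul_assoc, hjt j, mul_add, mul_ite, mul_one, mul_zero, ← mul_assoc, hTT j i,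
      mul_assoc]
  rw [Finset.sum_congr rfl fun j _ => this j, Finset.sum_add_distrib]
  simp

lemma nu_T (hTT : ∀ i j, T i * T j = T j * T i)
    (hDT : ∀ i j, D i * T j - T j * D i = if i = j then 1 else 0) (c : K) (i : Fin d) :
    nuOp T D c * T i = T i * nuOp T D (c + 1) := by
  unfold nuOp
  rw [add_mul, mul_add, theta_T T D hTT hDT i, smul_mul_assoc, one_mul, mul_smul_comm,
    mul_one, add_smul, one_smul]
  abel

lemma nu_pow_T (hTT : ∀ i j, T i * T j = T j * T i)
    (hDT : ∀ i j, D i * T j - T j * D i = if i = j then 1 else 0) (c : K) (i : Fin d)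
    (n : ℕ) : (nuOp T D c) ^ n * T i = T i * (nuOp T D (c + 1)) ^ n := by
  induction n with
  | zero => simp
  | succ n ih =>
    rw [pow_succ, mul_assoc, nu_T T D hTT hDT, ← mul_assoc, ih, mul_assoc, ← pow_succ]

lemma aeval_nu_T (hTT : ∀ i j, T i * T j = T j * T i)
    (hDT : ∀ i j, D i * T j - T j * D i = if i = j then 1 else 0) (c : K) (i : Fin d)
    (p : Polynomial K) :
    Polynomial.aeval (nuOp T D c) p * T i = T i * Polynomial.aeval (nuOp T D (c + 1)) p := by
  induction p using Polynomial.induction_on' with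
  | add p q hp hq => rw [map_add, map_add, add_mul, mul_add, hp, hq]
  | monomial n a =>
    rw [Polynomial.aeval_monomial, Polynomial.aeval_monomial, mul_assoc,
      nu_pow_T T D hTT hDT, ← mul_assoc, Algebra.commutes a (T i), mul_assoc]

lemma aeval_nu_T_apply (hTT : ∀ i j, T i * T j = T j * T i)
    (hDT : ∀ i j, D i * T j - T j * D i = if i = j then 1 else 0) (c : K) (i : Fin d)
    (p : Polynomial K) (x : M) :
    Polynomial.aeval (nuOp T D c) p (T i x) = T i (Polynomial.aeval (nuOp T D (c + 1)) p x) :=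
  DFunLike.congr_fun (aeval_nu_T T D hTT hDT c i p) x

variable (L : ℤ → Submodule K M)
  (hT : ∀ (i : Fin d) (j : ℤ), ∀ u ∈ L j, T i u ∈ L (j - 1))
  (hD : ∀ (i : Fin d) (j : ℤ), ∀ u ∈ L j, D i u ∈ L (j + 1))

include hT hD

lemma theta_mem (m : ℤ) (u : M) (hu : u ∈ L m) : (∑ i, T i * D i) u ∈ L m := by
  rw [LinearMap.sum_apply]
  refine Submodule.sum_mem _ fun i _ => ?_
  rw [Module.End.mul_apply]
  have h1 := hD i m u hu
  have h2 := hT i (m + 1) _ h1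
  simpa using h2

lemma nu_mem (c : K) (m : ℤ) (u : M) (hu : u ∈ L m) : nuOp T D c u ∈ L m := by
  unfold nuOp
  rw [LinearMap.add_apply, LinearMap.smul_apply, Module.End.one_apply]
  exact Submodule.add_mem _ (theta_mem T D L hT hD m u hu) (Submodule.smul_mem _ _ hu)

lemma nu_pow_mem (c : K) (n : ℕ) (m : ℤ) (u : M) (hu : u ∈ L m) :
    ((nuOp T D c) ^ n) u ∈ L m := by
  induction n with
  | zero => simpa using hu
  | succ n ih =>
    rw [pow_succ', Module.End.mul_apply]
    exact nu_mem T D L hT hD c m _ ih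

lemma aeval_nu_mem (c : K) (p : Polynomial K) (m : ℤ) (u : M) (hu : u ∈ L m) :
    Polynomial.aeval (nuOp T D c) p u ∈ L m := by
  induction p using Polynomial.induction_on' with
  | add p q hp hq =>
    rw [map_add, LinearMap.add_apply]
    exact Submodule.add_mem _ hp hq
  | monomial n a =>
    rw [Polynomial.aeval_monomial, Module.End.mul_apply]
    have : (algebraMap K (Module.End K M)) a = a • 1 := by
      rw [Algebra.algebraMap_eq_smul_one]
    rw [this, LinearMap.smul_apply, Module.End.one_apply]
    exact Submodule.smul_mem _ _ (nu_pow_mem T D L hT hD c n m u hu)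

end Alg


/-- Let `L = ⊕_{j∈ℤ} L_j` be a graded module over `gr(A_d)` (encoded by
commuting operators `T i` of degree `-1` and `D i` of degree `+1` with
`[D i, T j] = δ_ij`).  Assume `b(ϑ + j)` kills `L_j` for a nonzero polynomial `b`, where
`ϑ = Σ T i ∘ D i`.  If `b(k) ≠ 0` then the Koszul complex
`K^•(L_•[k], t_1, …, t_d)`, with term `L_{k+d-j} ⊗ Λ^j ℤ^d` in degree `-j`, is exact. -/
theorem stmt_3 {K : Type} [Field K] [CharZero K] {M : Type} [AddCommGroup M] [Module K M]
    (d : ℕ) (T D : Fin d → Module.End K M)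
    (hTT : ∀ i j, T i * T j = T j * T i)
    (hDD : ∀ i j, D i * D j = D j * D i)
    (hDT : ∀ i j, D i * T j - T j * D i = if i = j then 1 else 0)
    (L : ℤ → Submodule K M) (hdec : DirectSum.IsInternal L)
    (hT : ∀ (i : Fin d) (j : ℤ), ∀ u ∈ L j, T i u ∈ L (j - 1))
    (hD : ∀ (i : Fin d) (j : ℤ), ∀ u ∈ L j, D i u ∈ L (j + 1))
    (b : Polynomial K) (hb : b ≠ 0)
    (hbL : ∀ j : ℤ, ∀ u ∈ L j,
      (Polynomial.aeval ((∑ i, T i * D i) + (j : K) • (1 : Module.End K M)) b) u = 0)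
    (k : ℤ) (hk : Polynomial.eval (k : K) b ≠ 0) :
    (∀ f : {S : Finset (Fin d) // S.card = 0} → M,
        (∀ S, f S ∈ L (k + d)) → kosDelta d T 0 f = 0 → f = 0) ∧
    (∀ j : ℕ, j < d → ∀ f : {S : Finset (Fin d) // S.card = j + 1} → M,
        (∀ S, f S ∈ L (k + d - (j + 1))) → kosDelta d T (j + 1) f = 0 →
        ∃ g : {S : Finset (Fin d) // S.card = j} → M,
          (∀ S, g S ∈ L (k + d - j)) ∧ kosDelta d T j g = f) := by
  obtain ⟨q, hq⟩ := Polynomial.X_sub_C_dvd_sub_C_eval (a := ((k : ℤ) : K)) (p := b)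
  set e : K := Polynomial.eval ((k : ℤ) : K) b with he
  -- the key algebraic facts
  have hbnu : ∀ (m : ℤ) (u : M), u ∈ L m →
      Polynomial.aeval (nuOp T D ((m : ℤ) : K)) b u = 0 := by
    intro m u hu
    exact hbL m u hu
  have hfact : ∀ (m : ℤ) (u : M), u ∈ L m →
      nuOp T D ((m : ℤ) : K) (Polynomial.aeval (nuOp T D ((m : ℤ) : K)) q u)
        - ((k : ℤ) : K) • (Polynomial.aeval (nuOp T D ((m : ℤ) : K)) q u) = -(e • u) := by
    intro m u hu
    have h2 := congrArg (fun p : Polynomial K =>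
      (Polynomial.aeval (nuOp T D ((m : ℤ) : K)) p) u) hq
    simp only [map_sub, map_mul, LinearMap.sub_apply, Module.End.mul_apply,
      Polynomial.aeval_X, Polynomial.aeval_C, Algebra.algebraMap_eq_smul_one,
      LinearMap.smul_apply, Module.End.one_apply] at h2
    rw [hbnu m u hu] at h2
    rw [← h2]
    abel
  have hzero : ∀ (m : ℤ) (u : M), u ∈ L m →
      nuOp T D ((m : ℤ) : K) u - ((k : ℤ) : K) • u = 0 → u = 0 := by
    intro m u hu h0
    have hq' : b - Polynomial.C e = q * (Polynomial.X - Polynomial.C ((k : ℤ) : K)) := by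
      rw [hq]; ring
    have h3 := congrArg (fun p : Polynomial K =>
      (Polynomial.aeval (nuOp T D ((m : ℤ) : K)) p) u) hq'
    simp only [map_sub, map_mul, LinearMap.sub_apply, Module.End.mul_apply,
      Polynomial.aeval_X, Polynomial.aeval_C, Algebra.algebraMap_eq_smul_one,
      LinearMap.smul_apply, Module.End.one_apply] at h3
    rw [hbnu m u hu, ← map_sub, h0, map_zero] at h3
    have h5 : e • u = 0 := by simpa using h3.symm
    rcases smul_eq_zero.mp h5 with h | h
    · exact absurd h hk
    · exact h
  constructor
  · -- injectivity at the top
    intro f hf h0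
    funext S
    have hh := hom0 T D hDT f S
    rw [h0] at hh
    have hz : kosDown d D 0 (0 : {S : Finset (Fin d) // S.card = 0 + 1} → M) S = 0 := by
      simp [kosDown]
    rw [hz] at hh
    apply hzero (k + d) (f S) (hf S)
    have hsum : nuOp T D (((k + (d : ℤ)) : ℤ) : K) (f S)
        = (∑ i, T i (D i (f S))) + (((k + (d : ℤ)) : ℤ) : K) • f S := by
      simp [nuOp, LinearMap.sum_apply, Module.End.mul_apply]
    rw [hsum]
    have hsc : (((k + (d : ℤ)) : ℤ) : K) • f S - ((k : ℤ) : K) • f S = (d : ℤ) • f S := by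
      rw [← Int.cast_smul_eq_zsmul K, ← sub_smul]
      congr 1
      push_cast
      ring
    rw [add_sub_assoc, hsc, ← hh]
  · -- surjectivity
    intro j hj f hf hδ
    set m : ℤ := k + (d : ℤ) - ((j : ℤ) + 1) with hm
    set h : {S : Finset (Fin d) // S.card = j + 1} → M :=
      fun S => (-(e⁻¹)) • (Polynomial.aeval (nuOp T D ((m : ℤ) : K)) q) (f S) with hhdef
    have hhmem : ∀ S, h S ∈ L m := fun S =>
      Submodule.smul_mem _ _ (aeval_nu_mem T D L hT hD _ q m _ (hf S))
    have hinv : ∀ S, nuOp T D ((m : ℤ) : K) (h S) - ((k : ℤ) : K) • h S = f S := by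
      intro S
      rw [hhdef]
      simp only [map_smul]
      rw [smul_comm (((k : ℤ) : K)) (-(e⁻¹)), ← smul_sub, hfact m (f S) (hf S)]
      rw [smul_neg, neg_smul, neg_neg, smul_smul, inv_mul_cancel₀ hk, one_smul]
    have hc1 : (((m - 1 : ℤ)) : K) + 1 = ((m : ℤ) : K) := by push_cast; ring
    have hδh : kosDelta d T (j + 1) h = 0 := by
      funext S'
      rw [kosDelta_eq]
      have hexF : ∀ A : Finset (Fin d),
          exF d h A = (-(e⁻¹)) • Polynomial.aeval (nuOp T D ((m : ℤ) : K)) q (exF d f A) := by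
        intro A
        unfold exF
        by_cases hA : A.card = j + 1
        · simp [hA, hhdef]
        · simp [hA]
      have step : ∀ l ∈ S'.1, sg d S'.1 l • T l (exF d h (S'.1.erase l))
          = (-(e⁻¹)) • Polynomial.aeval (nuOp T D (((m - 1 : ℤ)) : K)) q
              (sg d S'.1 l • T l (exF d f (S'.1.erase l))) := by
        intro l hl
        rw [hexF, map_smul, map_zsmul]
        have := aeval_nu_T_apply T D hTT hDT (((m - 1 : ℤ)) : K) l q (exF d f (S'.1.erase l))
        rw [hc1] at this
        rw [← this, smul_comm]
      rw [Finset.sum_congr rfl step, ← Finset.smul_sum, ← map_sum, ← kosDelta_eq, hδ]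
      simp
    refine ⟨kosDown d D j h, ?_, ?_⟩
    · intro S
      have heq : m + 1 = k + (d : ℤ) - (j : ℤ) := by rw [hm]; ring
      rw [← heq]
      unfold kosDown
      refine Submodule.sum_mem _ fun l _ => ?_
      exact zsmul_mem (hD l.1 m _ (hhmem _)) _
    · funext S
      have hhom := homJ T D hDT h S
      rw [hδh] at hhom
      have hz2 : kosDown d D (j + 1)
          (0 : {S : Finset (Fin d) // S.card = j + 1 + 1} → M) S = 0 := by
        simp [kosDown]
      rw [hz2, add_zero] at hhom
      rw [hhom]
      have hnu : nuOp T D ((m : ℤ) : K) (h S)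
          = (∑ i, T i (D i (h S))) + ((m : ℤ) : K) • h S := by
        simp [nuOp, LinearMap.sum_apply, Module.End.mul_apply]
      have hsc : ((m : ℤ) : K) • h S - ((k : ℤ) : K) • h S = ((d : ℤ) - ((j : ℤ) + 1)) • h S := by
        rw [← Int.cast_smul_eq_zsmul K, ← sub_smul]
        congr 1
        rw [hm]
        push_cast
        ring
      have := hinv S
      rw [hnu, add_sub_assoc, hsc] at this
      exact this
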